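/- Let n ≥ 1 and let w be a T-invariant weight on ℝⁿ with dμ = w dx satisfying 0 < μ(B) < ∞ for all balls B. Then μ is doubling on ℝⁿ if and only if its restriction is doubling on the positive hyperquadrant X⁺, which in turn holds if and only if its restriction is doubling on the bow-tie X_{ℝⁿ}. -/

import Mathlib

open MeasureTheory Metric Set Filter ENNReal NNReal

noncomputable section

/-- Pointwise Lipschitz constant (as an extended nonnegative real);
it is `0` at isolated points since the limsup is over the punctured neighbourhood filter. -/
def lipConst {X : Type*} [MetricSpace X] (u : X → ℝ) (x : X) : ℝ≥0∞ :=
  Filter.limsup (fun y => ENNReal.ofReal (|u y - u x| / dist y x)) (nhdsWithin x {x}ᶜ)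

/-- A real-valued function is Lipschitz (with some constant). -/
def IsLip {X : Type*} [MetricSpace X] (u : X → ℝ) : Prop :=
  ∃ L : NNReal, LipschitzWith L u

/-- A doubling measure on a metric space: balls have positive finite measure and
`μ(B(x,2r)) ≤ C μ(B(x,r))`. -/
def IsDoubling {X : Type*} [MetricSpace X] [MeasurableSpace X] (μ : Measure X) : Prop :=
  ∃ C : ℝ≥0∞, ∀ (x : X) (r : ℝ), 0 < r →
    0 < μ (ball x r) ∧ μ (ball x r) < ⊤ ∧ μ (ball x (2 * r)) ≤ C * μ (ball x r)

/-- The (q,p)-Poincaré inequality (Lipschitz formulation) with dilation constant `lam`. -/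
def PoincareWith {X : Type*} [MetricSpace X] [MeasurableSpace X] (μ : Measure X)
    (q p lam : ℝ) : Prop :=
  ∃ C : ℝ, 0 < C ∧ ∀ (x : X) (r : ℝ), 0 < r → ∀ u : X → ℝ, IsLip u →
    ((∫⁻ y in ball x r,
        ENNReal.ofReal |u y - ⨍ z in ball x r, u z ∂μ| ^ q ∂μ) / μ (ball x r)) ^ (1 / q)
      ≤ ENNReal.ofReal (C * r) *
        ((∫⁻ y in ball x (lam * r), lipConst u y ^ p ∂μ) / μ (ball x (lam * r))) ^ (1 / p)

/-- `μ` supports a (q,p)-Poincaré inequality (Lipschitz formulation). -/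
def SupportsPoincare {X : Type*} [MetricSpace X] [MeasurableSpace X] (μ : Measure X)
    (q p : ℝ) : Prop :=
  ∃ lam : ℝ, 1 ≤ lam ∧ PoincareWith μ q p lam

/-- The variational p-capacity (Lipschitz formulation) of `E` with respect to `Ω`. -/
def varCap {X : Type*} [MetricSpace X] [MeasurableSpace X] (μ : Measure X) (p : ℝ)
    (E Ω : Set X) : ℝ≥0∞ :=
  ⨅ (u : X → ℝ) (_ : IsLip u ∧ (∀ x ∈ E, u x = 1) ∧ (∀ x ∉ Ω, u x = 0)),
    ∫⁻ x in Ω, lipConst u x ^ p ∂μ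

/-- Euclidean n-space. -/
abbrev En (n : ℕ) := EuclideanSpace ℝ (Fin n)

/-- The weighted measure `dμ = w dx`. -/
def wMeasure {n : ℕ} (w : En n → ℝ) : Measure (En n) :=
  volume.withDensity (fun x => ENNReal.ofReal (w x))

/-- The positive hyperquadrant. -/
def Xplus (n : ℕ) : Set (En n) := {x : En n | ∀ j : Fin n, 0 ≤ x j}

/-- The negative hyperquadrant. -/
def Xminus (n : ℕ) : Set (En n) := {x : En n | ∀ j : Fin n, x j ≤ 0}

/-- The Euclidean bow-tie. -/
def XBow (n : ℕ) : Set (En n) := Xplus n ∪ Xminus n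

/-- The restriction of a measure to a subset, as a measure on the subtype. -/
def subMeasure {X : Type*} [MeasurableSpace X] (μ : Measure X) (S : Set X) : Measure S :=
  μ.comap Subtype.val

/-- The folding map `T(x₁,…,xₙ) = (|x₁|,…,|xₙ|)`. -/
def Tmap {n : ℕ} (x : En n) : En n := WithLp.toLp 2 (fun j => |x j|)

/-- Muckenhoupt A_p condition (for 1 ≤ p < ∞). -/
def IsApWeight {α : Type*} [MetricSpace α] [MeasureSpace α] (p : ℝ) (w : α → ℝ) : Prop :=
  (p = 1 ∧ ∃ C : ℝ, 0 < C ∧ ∀ (x : α) (r : ℝ), 0 < r →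
      (⨍ y in ball x r, w y ∂volume) ≤ C * essInf w (volume.restrict (ball x r))) ∨
  (1 < p ∧ ∃ C : ℝ, 0 < C ∧ ∀ (x : α) (r : ℝ), 0 < r →
      (⨍ y in ball x r, w y ∂volume) *
        (⨍ y in ball x r, w y ^ (1 / (1 - p)) ∂volume) ^ (p - 1) ≤ C)

/-- The surface area ω_{n-1} of the unit sphere in ℝⁿ (with ω₀ = 2),
computed as n times the volume of the unit ball. -/
def sphereArea (n : ℕ) : ℝ := n * (volume (ball (0 : En n) 1)).toReal

/-- The two-sided capacity estimate
`cap_{p,μ}^{X⁺}({0}, B_r ∩ X⁺) ≃ r^{-p} μ(B_r)` for all `r > 0`. -/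
def capCondPlus (n : ℕ) (μ : Measure (En n)) (p : ℝ) : Prop :=
  ∃ c : ℝ, 1 ≤ c ∧ ∀ r : ℝ, 0 < r →
    ENNReal.ofReal c⁻¹ * (μ (ball 0 r) / ENNReal.ofReal (r ^ p)) ≤
      varCap (subMeasure μ (Xplus n)) p {x : Xplus n | (x : En n) = 0}
        (Subtype.val ⁻¹' ball 0 r) ∧
    varCap (subMeasure μ (Xplus n)) p {x : Xplus n | (x : En n) = 0}
        (Subtype.val ⁻¹' ball 0 r) ≤
      ENNReal.ofReal c * (μ (ball 0 r) / ENNReal.ofReal (r ^ p))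

/-- `φ(ρ) = max{1, -log ρ}`. -/
def phi (ρ : ℝ) : ℝ := max 1 (-Real.log ρ)


def sigmaLI (n : ℕ) (ε : Fin n → Bool) : En n ≃ₗᵢ[ℝ] En n :=
  LinearIsometryEquiv.piLpCongrRight 2
    (fun j => if ε j then LinearIsometryEquiv.neg ℝ else LinearIsometryEquiv.refl ℝ ℝ)

lemma sigmaLI_apply {n : ℕ} (ε : Fin n → Bool) (x : En n) (j : Fin n) :
    sigmaLI n ε x j = if ε j then -x j else x j := by
  simp only [sigmaLI, LinearIsometryEquiv.piLpCongrRight_apply, PiLp.toLp_apply]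
  split <;> simp

lemma Tmap_sigma {n : ℕ} (ε : Fin n → Bool) (x : En n) :
    Tmap (sigmaLI n ε x) = Tmap x := by
  ext j
  simp only [Tmap, sigmaLI_apply, PiLp.toLp_apply]
  split <;> simp

lemma Tmap_eq_self {n : ℕ} {x : En n} (hx : x ∈ Xplus n) : Tmap x = x := by
  ext j; exact abs_of_nonneg (hx j)

lemma Tmap_mem_Xplus {n : ℕ} (x : En n) : Tmap x ∈ Xplus n := fun j => show 0 ≤ |x j| from abs_nonneg _

lemma Tmap_lip {n : ℕ} (x y : En n) : dist (Tmap y) (Tmap x) ≤ dist y x := by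
  rw [EuclideanSpace.dist_eq, EuclideanSpace.dist_eq]
  apply Real.sqrt_le_sqrt
  apply Finset.sum_le_sum
  intro j _
  have h : dist (Tmap y j) (Tmap x j) ≤ dist (y j) (x j) := by
    simp only [Tmap, Real.dist_eq, PiLp.toLp_apply]
    exact abs_abs_sub_abs_le_abs_sub _ _
  exact pow_le_pow_left₀ dist_nonneg h 2

lemma w_sigma {n : ℕ} {w : En n → ℝ} (hT : ∀ x, w (Tmap x) = w x)
    (ε : Fin n → Bool) (x : En n) : w (sigmaLI n ε x) = w x := by
  rw [← hT (sigmaLI n ε x), Tmap_sigma, hT]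

lemma wInv {n : ℕ} {w : En n → ℝ} (hT : ∀ x, w (Tmap x) = w x)
    (hloc : LocallyIntegrable w volume) (ε : Fin n → Bool) {s : Set (En n)}
    (hs : MeasurableSet s) :
    wMeasure w ((sigmaLI n ε) ⁻¹' s) = wMeasure w s := by
  have hmp : MeasurePreserving (sigmaLI n ε) volume volume :=
    (sigmaLI n ε).measurePreserving
  have haem : AEMeasurable w (volume : Measure (En n)) :=
    hloc.aestronglyMeasurable.aemeasurable
  set g := haem.mk w with hg
  have hgmeas : Measurable g := haem.measurable_mk
  have hae : w =ᵐ[volume] g := haem.ae_eq_mk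
  have hW : (fun x => ENNReal.ofReal (w x)) =ᵐ[(volume : Measure (En n))]
      (fun x => ENNReal.ofReal (g x)) := hae.mono fun x hx => by simp [hx]
  have hμ : wMeasure w = volume.withDensity (fun x => ENNReal.ofReal (g x)) :=
    withDensity_congr_ae hW
  have h1 : (fun x => ENNReal.ofReal (g (sigmaLI n ε x))) =ᵐ[(volume : Measure (En n))]
      (fun x => ENNReal.ofReal (w (sigmaLI n ε x))) :=
    hmp.quasiMeasurePreserving.ae_eq_comp hW.symm
  have h2 : (fun x => ENNReal.ofReal (w (sigmaLI n ε x)))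
      = fun x => ENNReal.ofReal (w x) := funext fun x => by rw [w_sigma hT]
  have h3 : (fun x => ENNReal.ofReal (g (sigmaLI n ε x))) =ᵐ[(volume : Measure (En n))]
      (fun x => ENNReal.ofReal (g x)) := (h1.trans (h2 ▸ hW))
  have hG : Measurable fun x : En n => ENNReal.ofReal (g x) :=
    ENNReal.measurable_ofReal.comp hgmeas
  rw [hμ, withDensity_apply _ (hs.preimage hmp.measurable), withDensity_apply _ hs]
  calc ∫⁻ x in (sigmaLI n ε) ⁻¹' s, ENNReal.ofReal (g x) ∂volume
      = ∫⁻ x in (sigmaLI n ε) ⁻¹' s, ENNReal.ofReal (g (sigmaLI n ε x)) ∂volume :=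
        lintegral_congr_ae h3.symm.restrict
    _ = ∫⁻ y in s, ENNReal.ofReal (g y) ∂volume :=
        hmp.setLIntegral_comp_preimage hs hG

lemma measurableSet_Xplus {n : ℕ} : MeasurableSet (Xplus n) := by
  have h : Xplus n = ⋂ j, {x : En n | 0 ≤ x j} := by ext x; simp [Xplus]
  rw [h]
  exact MeasurableSet.iInter fun j =>
    measurableSet_le measurable_const (EuclideanSpace.proj j).continuous.measurable

lemma measurableSet_Xminus {n : ℕ} : MeasurableSet (Xminus n) := by
  have h : Xminus n = ⋂ j, {x : En n | x j ≤ 0} := by ext x; simp [Xminus]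
  rw [h]
  exact MeasurableSet.iInter fun j =>
    measurableSet_le (EuclideanSpace.proj j).continuous.measurable measurable_const

lemma fold_ball {n : ℕ} {w : En n → ℝ} (hT : ∀ x, w (Tmap x) = w x)
    (hloc : LocallyIntegrable w volume) {x : En n} (hx : x ∈ Xplus n) (r : ℝ) :
    wMeasure w (ball x r) ≤
      (Fintype.card (Fin n → Bool) : ℝ≥0∞) * wMeasure w (ball x r ∩ Xplus n) := by
  set μ := wMeasure w with hμ
  have hSmeas : MeasurableSet (ball x r ∩ Xplus n) :=
    measurableSet_ball.inter measurableSet_Xplus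
  have hsub : ball x r ⊆ ⋃ ε ∈ (Finset.univ : Finset (Fin n → Bool)),
      (sigmaLI n ε) ⁻¹' (ball x r ∩ Xplus n) := by
    intro y hy
    refine mem_iUnion₂.mpr ⟨fun j => decide (y j < 0), Finset.mem_univ _, ?_⟩
    have hTy : sigmaLI n (fun j => decide (y j < 0)) y = Tmap y := by
      ext j
      simp only [sigmaLI_apply, Tmap, PiLp.toLp_apply]
      by_cases h : y j < 0
      · simp [h, abs_of_neg h]
      · simp [h, abs_of_nonneg (not_lt.mp h)]
    rw [mem_preimage, hTy]
    refine ⟨?_, Tmap_mem_Xplus y⟩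
    rw [mem_ball]
    calc dist (Tmap y) x = dist (Tmap y) (Tmap x) := by rw [Tmap_eq_self hx]
      _ ≤ dist y x := Tmap_lip x y
      _ < r := mem_ball.mp hy
  calc μ (ball x r)
      ≤ μ (⋃ ε ∈ (Finset.univ : Finset (Fin n → Bool)),
          (sigmaLI n ε) ⁻¹' (ball x r ∩ Xplus n)) := measure_mono hsub
    _ ≤ ∑ ε ∈ (Finset.univ : Finset (Fin n → Bool)),
          μ ((sigmaLI n ε) ⁻¹' (ball x r ∩ Xplus n)) := measure_biUnion_finset_le _ _
    _ = ∑ _ε ∈ (Finset.univ : Finset (Fin n → Bool)), μ (ball x r ∩ Xplus n) := by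
        refine Finset.sum_congr rfl fun ε _ => ?_
        exact wInv hT hloc ε hSmeas
    _ = (Fintype.card (Fin n → Bool) : ℝ≥0∞) * μ (ball x r ∩ Xplus n) := by
        rw [Finset.sum_const, Finset.card_univ, nsmul_eq_mul]

lemma sigma_preimage_ball {n : ℕ} (ε : Fin n → Bool) (x : En n) (r : ℝ) :
    (sigmaLI n ε) ⁻¹' (ball (sigmaLI n ε x) r) = ball x r := by
  ext y
  simp only [mem_preimage, mem_ball]
  rw [(sigmaLI n ε).dist_map]

lemma ball_Tmap {n : ℕ} {w : En n → ℝ} (hT : ∀ x, w (Tmap x) = w x)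
    (hloc : LocallyIntegrable w volume) (x : En n) (r : ℝ) :
    wMeasure w (ball (Tmap x) r) = wMeasure w (ball x r) := by
  have hTx : sigmaLI n (fun j => decide (x j < 0)) x = Tmap x := by
    ext j
    simp only [sigmaLI_apply, Tmap, PiLp.toLp_apply]
    by_cases h : x j < 0
    · simp [h, abs_of_neg h]
    · simp [h, abs_of_nonneg (not_lt.mp h)]
  rw [← wInv hT hloc (fun j => decide (x j < 0)) (measurableSet_ball (x := Tmap x) (ε := r)),
    ← hTx, sigma_preimage_ball]

lemma neg_eq_sigma {n : ℕ} (x : En n) : sigmaLI n (fun _ => true) x = -x := by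
  ext j; simp [sigmaLI_apply]

lemma fold_ball_minus {n : ℕ} {w : En n → ℝ} (hT : ∀ x, w (Tmap x) = w x)
    (hloc : LocallyIntegrable w volume) {x : En n} (hx : x ∈ Xminus n) (r : ℝ) :
    wMeasure w (ball x r) ≤
      (Fintype.card (Fin n → Bool) : ℝ≥0∞) * wMeasure w (ball x r ∩ Xminus n) := by
  set σ := sigmaLI n (fun _ : Fin n => true)
  have hσ : ∀ y : En n, σ y = -y := neg_eq_sigma
  have hnegx : (-x : En n) ∈ Xplus n := by
    intro j
    have := hx j
    simpa using neg_nonneg.mpr this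
  have h1 : σ ⁻¹' (ball (-x) r ∩ Xplus n) = ball x r ∩ Xminus n := by
    ext y
    simp only [mem_preimage, mem_inter_iff, mem_ball, hσ]
    constructor
    · rintro ⟨hd, hp⟩
      refine ⟨?_, fun j => by simpa using neg_nonneg.mp (by simpa using hp j)⟩
      simpa [dist_neg_neg] using hd
    · rintro ⟨hd, hm⟩
      refine ⟨by simpa [dist_neg_neg] using hd, fun j => by simpa using neg_nonneg.mpr (hm j)⟩
  have h2 : σ ⁻¹' (ball (-x) r) = ball x r := by
    ext y
    simp only [mem_preimage, mem_ball, hσ, dist_neg_neg]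
  have hmeas1 : MeasurableSet (ball (-x : En n) r ∩ Xplus n) :=
    measurableSet_ball.inter measurableSet_Xplus
  calc wMeasure w (ball x r) = wMeasure w (σ ⁻¹' (ball (-x) r)) := by rw [h2]
    _ = wMeasure w (ball (-x) r) := wInv hT hloc _ measurableSet_ball
    _ ≤ (Fintype.card (Fin n → Bool) : ℝ≥0∞) * wMeasure w (ball (-x) r ∩ Xplus n) :=
        fold_ball hT hloc hnegx r
    _ = (Fintype.card (Fin n → Bool) : ℝ≥0∞) * wMeasure w (σ ⁻¹' (ball (-x) r ∩ Xplus n)) := by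
        rw [wInv hT hloc _ hmeas1]
    _ = (Fintype.card (Fin n → Bool) : ℝ≥0∞) * wMeasure w (ball x r ∩ Xminus n) := by rw [h1]

lemma subMeasure_ball {n : ℕ} (μ : Measure (En n)) {S : Set (En n)} (hS : MeasurableSet S)
    (x : S) (r : ℝ) :
    subMeasure μ S (ball x r) = μ (ball (x : En n) r ∩ S) := by
  have h1 : (ball x r : Set S) = Subtype.val ⁻¹' ball (x : En n) r := by
    ext y; simp [mem_ball, Subtype.dist_eq]
  have hemb : MeasurableEmbedding (Subtype.val : S → En n) :=
    MeasurableEmbedding.subtype_coe hS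
  rw [subMeasure, h1,
    Measure.comap_apply _ Subtype.coe_injective (fun s hs => hemb.measurableSet_image' hs) _
      (measurableSet_ball.preimage measurable_subtype_coe),
    Subtype.image_preimage_coe, Set.inter_comm]

lemma measurableSet_XBow {n : ℕ} : MeasurableSet (XBow n) :=
  measurableSet_Xplus.union measurableSet_Xminus

lemma doubling_iff_sub {n : ℕ} (μ : Measure (En n)) {S : Set (En n)} (hS : MeasurableSet S)
    (hballs : ∀ (x : En n) (r : ℝ), 0 < r → 0 < μ (ball x r) ∧ μ (ball x r) < ⊤)
    (K : ℝ≥0∞)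
    (hcmp : ∀ x ∈ S, ∀ r : ℝ, μ (ball x r) ≤ K * μ (ball x r ∩ S))
    (hproj : ∀ x : En n, ∃ x' ∈ S, ∀ r : ℝ, μ (ball x' r) = μ (ball x r)) :
    IsDoubling μ ↔ IsDoubling (subMeasure μ S) := by
  constructor
  · rintro ⟨C, hC⟩
    refine ⟨C * K, fun x r hr => ?_⟩
    have hb := subMeasure_ball μ hS x r
    have hb2 := subMeasure_ball μ hS x (2 * r)
    obtain ⟨hpos, hfin, hdbl⟩ := hC (x : En n) r hr
    refine ⟨?_, ?_, ?_⟩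
    · rw [hb, pos_iff_ne_zero]
      intro h0
      have := hcmp (x : En n) x.2 r
      rw [h0, mul_zero] at this
      exact absurd (le_antisymm this zero_le) (ne_of_gt hpos)
    · rw [hb]
      exact lt_of_le_of_lt (measure_mono inter_subset_left) hfin
    · rw [hb, hb2]
      calc μ (ball (x : En n) (2 * r) ∩ S) ≤ μ (ball (x : En n) (2 * r)) :=
            measure_mono inter_subset_left
        _ ≤ C * μ (ball (x : En n) r) := hdbl
        _ ≤ C * (K * μ (ball (x : En n) r ∩ S)) :=
            mul_le_mul_right (hcmp (x : En n) x.2 r) C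
        _ = C * K * μ (ball (x : En n) r ∩ S) := by rw [mul_assoc]
  · rintro ⟨C, hC⟩
    refine ⟨K * C, fun x r hr => ?_⟩
    obtain ⟨x', hx'S, hx'⟩ := hproj x
    refine ⟨(hballs x r hr).1, (hballs x r hr).2, ?_⟩
    obtain ⟨_, _, hdbl⟩ := hC ⟨x', hx'S⟩ r hr
    rw [subMeasure_ball μ hS ⟨x', hx'S⟩ r, subMeasure_ball μ hS ⟨x', hx'S⟩ (2 * r)] at hdbl
    calc μ (ball x (2 * r)) = μ (ball x' (2 * r)) := (hx' (2 * r)).symm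
      _ ≤ K * μ (ball x' (2 * r) ∩ S) := hcmp x' hx'S _
      _ ≤ K * (C * μ (ball x' r ∩ S)) := mul_le_mul_right hdbl K
      _ ≤ K * (C * μ (ball x' r)) :=
          mul_le_mul_right (mul_le_mul_right (measure_mono inter_subset_left) C) K
      _ = K * C * μ (ball x r) := by rw [hx' r, mul_assoc]


theorem statement7 (n : ℕ) (hn : 1 ≤ n)
    (w : En n → ℝ) (hT : ∀ x, w (Tmap x) = w x)
    (hw0 : ∀ x, 0 ≤ w x) (hloc : LocallyIntegrable w volume)
    (hballs : ∀ (x : En n) (r : ℝ), 0 < r →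
      0 < wMeasure w (ball x r) ∧ wMeasure w (ball x r) < ⊤) :
    (IsDoubling (wMeasure w) ↔ IsDoubling (subMeasure (wMeasure w) (Xplus n))) ∧
    (IsDoubling (subMeasure (wMeasure w) (Xplus n)) ↔
      IsDoubling (subMeasure (wMeasure w) (XBow n))) := by
  set K : ℝ≥0∞ := (Fintype.card (Fin n → Bool) : ℝ≥0∞)
  have h1 : IsDoubling (wMeasure w) ↔ IsDoubling (subMeasure (wMeasure w) (Xplus n)) :=
    doubling_iff_sub (wMeasure w) measurableSet_Xplus hballs K
      (fun x hx r => fold_ball hT hloc hx r)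
      (fun x => ⟨Tmap x, Tmap_mem_Xplus x, fun r => ball_Tmap hT hloc x r⟩)
  have h2 : IsDoubling (wMeasure w) ↔ IsDoubling (subMeasure (wMeasure w) (XBow n)) := by
    refine doubling_iff_sub (wMeasure w) measurableSet_XBow hballs K ?_
      (fun x => ⟨Tmap x, Or.inl (Tmap_mem_Xplus x), fun r => ball_Tmap hT hloc x r⟩)
    rintro x (hp | hm) r
    · exact (fold_ball hT hloc hp r).trans
        (mul_le_mul_right (measure_mono (inter_subset_inter_right _ subset_union_left)) K)
    · exact (fold_ball_minus hT hloc hm r).trans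
        (mul_le_mul_right (measure_mono (inter_subset_inter_right _ subset_union_right)) K)
  exact ⟨h1, h1.symm.trans h2⟩
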